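/- arXiv:2507.16447 — 2 statements merged into one kernel-verified Lean document; each statement's English description precedes it below -/
import Mathlib

section
/- Supersolution property: let D₁ ∈ (0,1/2], ε ∈ (0,1), M ≥ 0, α ≥ 0, |Ω| > 0, and set D₂ = ε^{−2}[1/2 + ε(M + |Ω|α/3)], φ̄(t) = 1 − D₁e^{−D₂t}. Then for every t ≥ 0 and every real s with |s| ≤ M + |Ω|α/3, one has φ̄(1−φ̄)(φ̄ − 1/2) + ε·φ̄(1−φ̄)·s ≤ ε²·φ̄'(t). -/
/-- Supersolution property: with `D₂ = ε⁻²(1/2 + ε(M + |Ω|α/3))` and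
`φ̄(t) = 1 - D₁e^{-D₂t}`, for all `t ≥ 0` and `|s| ≤ M + |Ω|α/3`,
`φ̄(1-φ̄)(φ̄-1/2) + εφ̄(1-φ̄)s ≤ ε²φ̄'(t)`. -/
theorem stmt11 (D₁ ε M α vol : ℝ)
    (hD₁ : D₁ ∈ Set.Ioc (0:ℝ) (1/2)) (hε : ε ∈ Set.Ioo (0:ℝ) 1)
    (hM : 0 ≤ M) (hα : 0 ≤ α) (hvol : 0 < vol)
    (D₂ : ℝ) (hD₂ : D₂ = ε ^ (-2 : ℤ) * (1 / 2 + ε * (M + vol * α / 3)))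
    (φbar : ℝ → ℝ) (hφbar : ∀ t, φbar t = 1 - D₁ * Real.exp (-D₂ * t)) :
    ∀ t, 0 ≤ t → ∀ s : ℝ, |s| ≤ M + vol * α / 3 →
      φbar t * (1 - φbar t) * (φbar t - 1 / 2) + ε * (φbar t * (1 - φbar t)) * s
        ≤ ε ^ 2 * deriv φbar t := by
  obtain ⟨hD₁0, hD₁2⟩ := hD₁
  obtain ⟨hε0, hε1⟩ := hε
  have hK : 0 ≤ M + vol * α / 3 := by positivity
  have hD₂0 : 0 ≤ D₂ := by
    rw [hD₂]; positivity
  intro t ht s hs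
  have hφ : φbar = fun t => 1 - D₁ * Real.exp (-D₂ * t) := funext hφbar
  have hderiv : deriv φbar t = D₁ * D₂ * Real.exp (-D₂ * t) := by
    have h1 : HasDerivAt (fun t : ℝ => -D₂ * t) (-D₂) t := by
      simpa using (hasDerivAt_id t).const_mul (-D₂)
    have h2 := ((h1.exp.const_mul D₁).const_sub 1)
    rw [hφ]
    rw [h2.deriv]; ring
  rw [hderiv, hφbar t]
  set u := D₁ * Real.exp (-D₂ * t) with hu
  have hexp : Real.exp (-D₂ * t) ≤ 1 := by
    apply Real.exp_le_one_iff.mpr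
    nlinarith
  have hu0 : 0 < u := by positivity
  have hu2 : u ≤ 1 / 2 := by
    calc u ≤ D₁ * 1 := by nlinarith [Real.exp_pos (-D₂*t)]
    _ ≤ 1/2 := by linarith
  have hεD : ε ^ 2 * D₂ = 1 / 2 + ε * (M + vol * α / 3) := by
    rw [hD₂, zpow_neg, zpow_two]
    field_simp
  have hrhs : ε ^ 2 * (D₁ * D₂ * Real.exp (-D₂ * t)) = (1 / 2 + ε * (M + vol * α / 3)) * u := by
    linear_combination (D₁ * Real.exp (-D₂ * t)) * hεD
  rw [hrhs]
  obtain ⟨hs1, hs2⟩ := abs_le.mp hs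
  have h1 : (1 - u) * s ≤ M + vol * α / 3 := by
    nlinarith [mul_nonneg (by linarith : (0:ℝ) ≤ 1 - u) (by linarith : (0:ℝ) ≤ M + vol * α / 3 - s), mul_nonneg hu0.le hK]
  nlinarith [mul_pos hu0 hu0, mul_nonneg (mul_nonneg hε0.le hu0.le) (by linarith : (0:ℝ) ≤ M + vol * α / 3 - (1 - u) * s)]
end

section
/- Lower bound for ∫ G(φ)²: if φ : Ω → ℝ takes values in [0,1] and is measurable on a finite measure space Ω, and E := ∫_Ω W(φ)/(2ε) dx, then ∫_Ω G(φ)² dx ≥ (1/6)∫_Ω G(φ) dx − (11/9)·ε·E·2, i.e. ∫_Ω G(φ)² dx ≥ (1/6)∫_Ω G(φ) dx − (22/9)εE, where G(φ) = φ²/2 − φ³/3, W(φ) = φ²(1−φ)²/2. -/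
open MeasureTheory

noncomputable def G (φ : ℝ) : ℝ := φ ^ 2 / 2 - φ ^ 3 / 3

noncomputable def W (φ : ℝ) : ℝ := φ ^ 2 * (1 - φ) ^ 2 / 2

lemma pointwise_bound (y : ℝ) (hy : y ∈ Set.Icc (0:ℝ) 1) :
    (1/6) * G y - (11/9) * W y ≤ G y ^ 2 := by
  obtain ⟨h0, h1⟩ := hy
  simp only [G, W]
  nlinarith [sq_nonneg (y * (1 - y)), sq_nonneg y, sq_nonneg (1 - y), mul_nonneg h0 (sub_nonneg.2 h1), sq_nonneg (y*(1-y)*(2*y-1))]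

/-- Lower bound for `∫ G(φ)²`: for measurable `φ` with values in `[0,1]` on a finite
measure space and `E = ∫ W(φ)/(2ε)`,
`∫ G(φ)² ≥ (1/6)∫ G(φ) - (22/9)εE`. -/
theorem stmt17 {Ω : Type*} [MeasurableSpace Ω] (μ : Measure Ω) [IsFiniteMeasure μ]
    (ε : ℝ) (hε : 0 < ε) (φ : Ω → ℝ) (hφm : Measurable φ)
    (hφ : ∀ x, φ x ∈ Set.Icc (0:ℝ) 1) :
    (∫ x, G (φ x) ^ 2 ∂μ)
      ≥ (1 / 6) * (∫ x, G (φ x) ∂μ) - (22 / 9) * ε * (∫ x, W (φ x) / (2 * ε) ∂μ) := by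
  have hGm : Measurable fun x => G (φ x) := by
    exact ((hφm.pow_const 2).div_const 2).sub ((hφm.pow_const 3).div_const 3)
  have hWm : Measurable fun x => W (φ x) := by
    simpa [W] using ((hφm.pow_const 2).mul (((measurable_const.sub hφm).pow_const 2))).div_const 2
  have hGb : ∀ x, |G (φ x)| ≤ 1 := by
    intro x
    obtain ⟨h0, h1⟩ := hφ x
    rw [abs_le]
    constructor <;> [skip; skip] <;> simp only [G] <;> nlinarith
  have hWb : ∀ x, |W (φ x)| ≤ 1 := by
    intro x
    obtain ⟨h0, h1⟩ := hφ x
    rw [abs_le]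
    constructor <;> [skip; skip] <;> simp only [W] <;>
      nlinarith [sq_nonneg (2 * φ x - 1), mul_nonneg h0 (sub_nonneg.2 h1),
        sq_nonneg (φ x * (1 - φ x))]
  have hGi : Integrable (fun x => G (φ x)) μ := by
    apply (integrable_const (1:ℝ)).mono' hGm.aestronglyMeasurable
    filter_upwards with x using by simpa using hGb x
  have hWi : Integrable (fun x => W (φ x)) μ := by
    apply (integrable_const (1:ℝ)).mono' hWm.aestronglyMeasurable
    filter_upwards with x using by simpa using hWb x
  have hG2i : Integrable (fun x => G (φ x) ^ 2) μ := by
    apply (integrable_const (1:ℝ)).mono' (hGm.pow_const 2).aestronglyMeasurable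
    filter_upwards with x
    rw [Real.norm_eq_abs, abs_pow]
    calc |G (φ x)| ^ 2 ≤ 1 ^ 2 := by
          exact pow_le_pow_left₀ (abs_nonneg _) (hGb x) 2
      _ = 1 := one_pow 2
  have hWint : (∫ x, W (φ x) / (2 * ε) ∂μ) = (∫ x, W (φ x) ∂μ) / (2 * ε) :=
    integral_div _ _
  rw [hWint]
  have hεne : (2 * ε) ≠ 0 := by positivity
  have key : (∫ x, (1/6) * G (φ x) - (11/9) * W (φ x) ∂μ) ≤ ∫ x, G (φ x) ^ 2 ∂μ := by
    apply integral_mono ((hGi.const_mul _).sub (hWi.const_mul _)) hG2i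
    intro x
    exact pointwise_bound (φ x) (hφ x)
  rw [integral_sub (hGi.const_mul _) (hWi.const_mul _), integral_const_mul, integral_const_mul] at key
  have : (22 / 9) * ε * ((∫ x, W (φ x) ∂μ) / (2 * ε)) = (11/9) * ∫ x, W (φ x) ∂μ := by
    field_simp
    ring
  rw [ge_iff_le, this]
  linarith
end
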